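/- Let X be a real Banach lattice and T : X → X a positive invertible bounded linear operator whose inverse T^{-1} is also positive. Let ρ > 0 and suppose that ρ^{-n} ≤ ‖T^{-n}‖ for every n ∈ ℕ and that ‖T^{-n}‖^{1/n} → ρ^{-1} as n → ∞. Then ρ is an approximate eigenvalue of T: there exists a sequence (f_j) in X with ‖f_j‖ = 1 and ‖T f_j − ρ·f_j‖ → 0. -/

import Mathlib

open Filter

set_option maxHeartbeats 1000000 in
theorem stmt7 {X : Type*} [NormedAddCommGroup X] [Lattice X] [IsOrderedAddMonoid X]
    [HasSolidNorm X] [NormedSpace ℝ X]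
    [PosSMulStrictMono ℝ X] [CompleteSpace X]
    (T : X ≃L[ℝ] X) (hT : ∀ x : X, 0 ≤ x → 0 ≤ T x)
    (hTinv : ∀ x : X, 0 ≤ x → 0 ≤ T.symm x)
    (ρ : ℝ) (hρ : 0 < ρ)
    (hlow : ∀ n : ℕ, ρ ^ (-(n : ℤ)) ≤ ‖((T.symm : X →L[ℝ] X)) ^ n‖)
    (hlim : Tendsto (fun n : ℕ => ‖((T.symm : X →L[ℝ] X)) ^ n‖ ^ (1 / (n : ℝ))) atTop
      (nhds ρ⁻¹)) :
    ∃ f : ℕ → X, (∀ j, ‖f j‖ = 1) ∧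
      Tendsto (fun j => ‖T (f j) - ρ • f j‖) atTop (nhds 0) := by
  classical
  set S : X →L[ℝ] X := (T.symm : X →L[ℝ] X) with hSdef
  set μ : ℝ := ρ⁻¹ with hμdef
  have hμ : 0 < μ := inv_pos.mpr hρ
  have hS : ∀ x : X, 0 ≤ x → 0 ≤ S x := by
    intro x hx
    simpa [hSdef] using hTinv x hx
  have hSn : ∀ n : ℕ, ∀ x : X, 0 ≤ x → 0 ≤ (S ^ n) x := by
    intro n
    induction n with
    | zero => intro x hx; simpa using hx
    | succ n ih =>
        intro x hx
        rw [pow_succ, ContinuousLinearMap.mul_apply]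
        exact ih _ (hS x hx)
  have hSmono : ∀ (n : ℕ) (a b : X), a ≤ b → (S ^ n) a ≤ (S ^ n) b := by
    intro n a b hab
    have h := hSn n (b - a) (sub_nonneg.mpr hab)
    rw [map_sub] at h
    exact sub_nonneg.mp h
  have habs : ∀ (n : ℕ) (y : X), ‖(S ^ n) y‖ ≤ ‖(S ^ n) |y|‖ := by
    intro n y
    apply norm_le_norm_of_abs_le_abs
    rw [abs_of_nonneg (hSn n |y| (abs_nonneg y)), abs_le']
    constructor
    · exact hSmono n y |y| (le_abs_self y)
    · have h1 := hSmono n (-y) |y| (neg_le_abs y)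
      rwa [map_neg] at h1
  have hopnorm : ∀ (n : ℕ) (C : ℝ), 0 ≤ C → (∀ x : X, 0 ≤ x → ‖(S ^ n) x‖ ≤ C * ‖x‖) →
      ‖S ^ n‖ ≤ C := by
    intro n C hC h
    apply ContinuousLinearMap.opNorm_le_bound _ hC
    intro y
    calc ‖(S ^ n) y‖ ≤ ‖(S ^ n) |y|‖ := habs n y
      _ ≤ C * ‖|y|‖ := h |y| (abs_nonneg y)
      _ = C * ‖y‖ := by rw [norm_abs_eq_norm]
  have hμlow : ∀ n : ℕ, μ ^ n ≤ ‖S ^ n‖ := by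
    intro n
    have h := hlow n
    rwa [zpow_neg, zpow_natCast, ← inv_pow] at h
  have hsum : ∀ lam : ℝ, μ < lam → Summable (fun n : ℕ => ‖S ^ n‖ * (lam ^ (n + 1))⁻¹) := by
    intro lam hlam
    have hlampos : 0 < lam := hμ.trans hlam
    obtain ⟨r, hr1, hr2⟩ := exists_between hlam
    have hrpos : 0 < r := hμ.trans hr1
    have hev : ∀ᶠ n : ℕ in atTop, ‖S ^ n‖ ≤ r ^ n := by
      have h1 : ∀ᶠ n : ℕ in atTop, ‖S ^ n‖ ^ (1 / (n : ℝ)) < r := hlim.eventually_lt_const hr1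
      filter_upwards [h1, eventually_ge_atTop 1] with n hn hn1
      have hnpos : (0 : ℝ) < (n : ℝ) := by exact_mod_cast hn1
      have hnn : ‖S ^ n‖ = (‖S ^ n‖ ^ (1 / (n : ℝ))) ^ (n : ℝ) := by
        rw [← Real.rpow_mul (norm_nonneg _), one_div, inv_mul_cancel₀ hnpos.ne',
          Real.rpow_one]
      rw [hnn]
      calc (‖S ^ n‖ ^ (1 / (n : ℝ))) ^ (n : ℝ)
          ≤ r ^ (n : ℝ) :=
            Real.rpow_le_rpow (Real.rpow_nonneg (norm_nonneg _) _) hn.le hnpos.le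
        _ = r ^ n := Real.rpow_natCast r n
    apply Summable.of_norm_bounded_eventually_nat (g := fun n => (r / lam) ^ n * lam⁻¹)
    · exact (summable_geometric_of_lt_one (by positivity)
        (by rw [div_lt_one hlampos]; exact hr2)).mul_right _
    · filter_upwards [hev] with n hn
      rw [Real.norm_eq_abs, abs_of_nonneg (by positivity)]
      calc ‖S ^ n‖ * (lam ^ (n + 1))⁻¹ ≤ r ^ n * (lam ^ (n + 1))⁻¹ := by
            exact mul_le_mul_of_nonneg_right hn (by positivity)
        _ = (r / lam) ^ n * lam⁻¹ := by
            rw [div_pow, div_eq_mul_inv, mul_assoc, ← mul_inv, ← pow_succ]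
  -- key claim : μ is an approximate eigenvalue of S
  have key : ∀ ε : ℝ, 0 < ε → ∃ x : X, ‖x‖ = 1 ∧ ‖S x - μ • x‖ < ε := by
    intro ε hε
    by_contra hcon
    push_neg at hcon
    have hlower : ∀ y : X, ε * ‖y‖ ≤ ‖S y - μ • y‖ := by
      intro y
      rcases eq_or_ne y 0 with rfl | hy
      · simp
      · have hny : 0 < ‖y‖ := norm_pos_iff.mpr hy
        have hunit : ‖‖y‖⁻¹ • y‖ = 1 := by
          rw [norm_smul, Real.norm_eq_abs, abs_of_nonneg (inv_nonneg.mpr hny.le),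
            inv_mul_cancel₀ hny.ne']
        have h2 := hcon (‖y‖⁻¹ • y) hunit
        have h3 : S (‖y‖⁻¹ • y) - μ • (‖y‖⁻¹ • y) = ‖y‖⁻¹ • (S y - μ • y) := by
          rw [map_smul, smul_comm μ, smul_sub]
        rw [h3, norm_smul, Real.norm_eq_abs, abs_of_nonneg (inv_nonneg.mpr hny.le),
          inv_mul_eq_div, le_div_iff₀ hny] at h2
        linarith
    obtain ⟨N, hN⟩ := exists_nat_gt (max (2 * μ / ε) (4 * μ ^ 2 * Real.exp 2 / ε ^ 2))
    have hN1 : 2 * μ / ε < (N : ℝ) := lt_of_le_of_lt (le_max_left _ _) hN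
    have hN2 : 4 * μ ^ 2 * Real.exp 2 / ε ^ 2 < (N : ℝ) := lt_of_le_of_lt (le_max_right _ _) hN
    have hNpos : (0 : ℝ) < (N : ℝ) + 1 := by positivity
    set lam : ℝ := μ * (1 + ((N : ℝ) + 1)⁻¹) with hlamdef
    have hlam : μ < lam := by
      rw [hlamdef]
      nlinarith [inv_pos.mpr hNpos]
    have hlampos : 0 < lam := hμ.trans hlam
    have hlamsub : lam - μ ≤ ε / 2 := by
      have h1 : lam - μ = μ * ((N : ℝ) + 1)⁻¹ := by rw [hlamdef]; ring
      rw [h1, ← div_eq_mul_inv, div_le_iff₀ hNpos]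
      rw [div_lt_iff₀ hε] at hN1
      nlinarith
    have hsum' := hsum lam hlam
    have hsummx : ∀ x : X, Summable (fun n : ℕ => (lam ^ (n + 1))⁻¹ • (S ^ n) x) := by
      intro x
      apply Summable.of_norm_bounded (g := fun n => ‖S ^ n‖ * (lam ^ (n + 1))⁻¹ * ‖x‖)
        (hsum'.mul_right ‖x‖)
      intro n
      rw [norm_smul, Real.norm_eq_abs, abs_of_nonneg (by positivity)]
      calc (lam ^ (n + 1))⁻¹ * ‖(S ^ n) x‖
          ≤ (lam ^ (n + 1))⁻¹ * (‖S ^ n‖ * ‖x‖) :=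
            mul_le_mul_of_nonneg_left ((S ^ n).le_opNorm x) (by positivity)
        _ = ‖S ^ n‖ * (lam ^ (n + 1))⁻¹ * ‖x‖ := by ring
    set b : X → X := fun x => ∑' n : ℕ, (lam ^ (n + 1))⁻¹ • (S ^ n) x with hbdef
    have hbx : ∀ x : X, b x = ∑' n : ℕ, (lam ^ (n + 1))⁻¹ • (S ^ n) x := fun x => rfl
    have hueq : ∀ (x : X) (n : ℕ),
        lam • ((lam ^ (n + 1))⁻¹ • (S ^ n) x) = (lam ^ n)⁻¹ • (S ^ n) x := by
      intro x n
      rw [smul_smul]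
      congr 1
      rw [pow_succ, mul_inv]
      have hl : lam ≠ 0 := hlampos.ne'
      field_simp
    have hb_eq : ∀ x : X, S (b x) = lam • b x - x := by
      intro x
      have h1 : S (b x) = ∑' n : ℕ, (lam ^ (n + 1))⁻¹ • (S ^ (n + 1)) x := by
        rw [hbx, S.map_tsum (hsummx x)]
        congr 1
        funext n
        rw [map_smul]
        congr 1
        rw [pow_succ', ContinuousLinearMap.mul_apply]
      have hsummu : Summable (fun n : ℕ => (lam ^ n)⁻¹ • (S ^ n) x) := by
        have h := (hsummx x).const_smul lam
        simpa only [hueq x] using h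
      have h2 : lam • b x = x + ∑' n : ℕ, (lam ^ (n + 1))⁻¹ • (S ^ (n + 1)) x := by
        rw [hbx, ← Summable.tsum_const_smul lam (hsummx x)]
        simp_rw [hueq x]
        rw [Summable.tsum_eq_zero_add hsummu]
        simp
      rw [h1, h2]
      abel
    have hb_bound : ∀ x : X, ‖b x‖ ≤ 2 / ε * ‖x‖ := by
      intro x
      have h1 := hlower (b x)
      have h2 : S (b x) - μ • b x = (lam - μ) • b x - x := by
        rw [hb_eq x, sub_smul]
        abel
      rw [h2] at h1
      have h3 : ‖(lam - μ) • b x - x‖ ≤ (lam - μ) * ‖b x‖ + ‖x‖ := by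
        calc ‖(lam - μ) • b x - x‖ ≤ ‖(lam - μ) • b x‖ + ‖x‖ := norm_sub_le _ _
          _ = (lam - μ) * ‖b x‖ + ‖x‖ := by
              rw [norm_smul, Real.norm_eq_abs, abs_of_nonneg (by linarith)]
      have h4 : ε / 2 * ‖b x‖ ≤ ‖x‖ := by
        have h5 := mul_le_mul_of_nonneg_right hlamsub (norm_nonneg (b x))
        linarith
      calc ‖b x‖ = 2 / ε * (ε / 2 * ‖b x‖) := by field_simp
        _ ≤ 2 / ε * ‖x‖ := mul_le_mul_of_nonneg_left h4 (by positivity)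
    have hb_pos : ∀ x : X, 0 ≤ x → 0 ≤ b x := by
      intro x hx
      exact tsum_nonneg fun n => smul_nonneg (by positivity) (hSn n x hx)
    have hb_ge : ∀ x : X, 0 ≤ x → ∀ m : ℕ, (lam ^ (m + 1))⁻¹ • (S ^ m) x ≤ b x := by
      intro x hx m
      exact Summable.le_tsum (hsummx x) m fun j _ => smul_nonneg (by positivity) (hSn j x hx)
    have hmain : ∀ x : X, 0 ≤ x →
        ‖(S ^ N) x‖ ≤ (lam ^ (N + 2) * (((N : ℝ) + 1)⁻¹ * (4 / ε ^ 2))) * ‖x‖ := by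
      intro x hx
      have hkey : (N + 1) • ((lam ^ (N + 2))⁻¹ • (S ^ N) x) ≤ b (b x) := by
        have hterm : ∀ n ∈ Finset.range (N + 1),
            (lam ^ (N + 2))⁻¹ • (S ^ N) x ≤ (lam ^ (n + 1))⁻¹ • ((S ^ n) (b x)) := by
          intro n hn
          rw [Finset.mem_range] at hn
          have hn' : n ≤ N := Nat.lt_succ_iff.mp hn
          have h1 : (lam ^ (N - n + 1))⁻¹ • (S ^ (N - n)) x ≤ b x := hb_ge x hx (N - n)
          have h2 := hSmono n _ _ h1
          have h3 : (S ^ n) ((lam ^ (N - n + 1))⁻¹ • (S ^ (N - n)) x)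
              = (lam ^ (N - n + 1))⁻¹ • (S ^ N) x := by
            rw [map_smul]
            congr 1
            rw [← ContinuousLinearMap.mul_apply, ← pow_add]
            congr 2
            omega
          have h4 := smul_le_smul_of_nonneg_left h2
            (inv_nonneg.mpr (pow_nonneg hlampos.le (n + 1)))
          rw [h3, smul_smul] at h4
          have h5 : (lam ^ (n + 1))⁻¹ * (lam ^ (N - n + 1))⁻¹ = (lam ^ (N + 2))⁻¹ := by
            rw [← mul_inv, ← pow_add]
            congr 2
            omega
          rwa [h5] at h4
        calc (N + 1) • ((lam ^ (N + 2))⁻¹ • (S ^ N) x)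
            = ∑ n ∈ Finset.range (N + 1), (lam ^ (N + 2))⁻¹ • (S ^ N) x := by
              rw [Finset.sum_const, Finset.card_range]
          _ ≤ ∑ n ∈ Finset.range (N + 1), (lam ^ (n + 1))⁻¹ • ((S ^ n) (b x)) :=
              Finset.sum_le_sum hterm
          _ ≤ ∑' n : ℕ, (lam ^ (n + 1))⁻¹ • ((S ^ n) (b x)) :=
              Summable.sum_le_tsum _ (fun n _ => smul_nonneg (by positivity) (hSn n _ (hb_pos x hx)))
                (hsummx (b x))
          _ = b (b x) := rfl
      have hnn : (0 : X) ≤ (N + 1) • ((lam ^ (N + 2))⁻¹ • (S ^ N) x) :=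
        nsmul_nonneg (smul_nonneg (by positivity) (hSn N x hx)) _
      have h6 : ‖(N + 1) • ((lam ^ (N + 2))⁻¹ • (S ^ N) x)‖ ≤ ‖b (b x)‖ := by
        apply norm_le_norm_of_abs_le_abs
        rw [abs_of_nonneg hnn, abs_of_nonneg (hb_pos (b x) (hb_pos x hx))]
        exact hkey
      have h7 : ‖(N + 1) • ((lam ^ (N + 2))⁻¹ • (S ^ N) x)‖
          = ((N : ℝ) + 1) * ((lam ^ (N + 2))⁻¹ * ‖(S ^ N) x‖) := by
        rw [← Nat.cast_smul_eq_nsmul ℝ, norm_smul, norm_smul, Real.norm_eq_abs, Real.norm_eq_abs,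
          abs_of_nonneg (by positivity : (0:ℝ) ≤ ((N + 1 : ℕ) : ℝ)),
          abs_of_nonneg (by positivity : (0:ℝ) ≤ (lam ^ (N + 2))⁻¹)]
        push_cast
        ring
      have h8 : ‖b (b x)‖ ≤ 4 / ε ^ 2 * ‖x‖ := by
        calc ‖b (b x)‖ ≤ 2 / ε * ‖b x‖ := hb_bound (b x)
          _ ≤ 2 / ε * (2 / ε * ‖x‖) := mul_le_mul_of_nonneg_left (hb_bound x) (by positivity)
          _ = 4 / ε ^ 2 * ‖x‖ := by field_simp; ring
      have h9 : ((N : ℝ) + 1) * ((lam ^ (N + 2))⁻¹ * ‖(S ^ N) x‖) ≤ 4 / ε ^ 2 * ‖x‖ := by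
        rw [← h7]
        exact h6.trans h8
      have hK : (0 : ℝ) < lam ^ (N + 2) := by positivity
      calc ‖(S ^ N) x‖
          = (lam ^ (N + 2) * ((N : ℝ) + 1)⁻¹)
            * (((N : ℝ) + 1) * ((lam ^ (N + 2))⁻¹ * ‖(S ^ N) x‖)) := by
            field_simp
        _ ≤ (lam ^ (N + 2) * ((N : ℝ) + 1)⁻¹) * (4 / ε ^ 2 * ‖x‖) :=
            mul_le_mul_of_nonneg_left h9 (by positivity)
        _ = (lam ^ (N + 2) * (((N : ℝ) + 1)⁻¹ * (4 / ε ^ 2))) * ‖x‖ := by ring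
    have hSNnorm : ‖S ^ N‖ ≤ lam ^ (N + 2) * (((N : ℝ) + 1)⁻¹ * (4 / ε ^ 2)) :=
      hopnorm N _ (by positivity) hmain
    have hexp : lam ^ (N + 2) ≤ μ ^ (N + 2) * Real.exp 2 := by
      rw [hlamdef, mul_pow]
      apply mul_le_mul_of_nonneg_left _ (pow_nonneg hμ.le _)
      calc (1 + ((N : ℝ) + 1)⁻¹) ^ (N + 2)
          ≤ Real.exp (((N : ℝ) + 1)⁻¹) ^ (N + 2) := by
            apply pow_le_pow_left₀ (by positivity)
            linarith [Real.add_one_le_exp (((N : ℝ) + 1)⁻¹)]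
        _ = Real.exp (((N + 2 : ℕ) : ℝ) * ((N : ℝ) + 1)⁻¹) := by
            rw [← Real.exp_nat_mul]
        _ ≤ Real.exp 2 := by
            apply Real.exp_le_exp.mpr
            rw [← div_eq_mul_inv, div_le_iff₀ hNpos]
            push_cast
            linarith
    have hμN : (0 : ℝ) < μ ^ N := pow_pos hμ N
    have h10 : μ ^ N * 1 ≤ μ ^ N * (μ ^ 2 * Real.exp 2 * (((N : ℝ) + 1)⁻¹ * (4 / ε ^ 2))) := by
      rw [mul_one]
      calc μ ^ N ≤ ‖S ^ N‖ := hμlow N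
        _ ≤ lam ^ (N + 2) * (((N : ℝ) + 1)⁻¹ * (4 / ε ^ 2)) := hSNnorm
        _ ≤ μ ^ (N + 2) * Real.exp 2 * (((N : ℝ) + 1)⁻¹ * (4 / ε ^ 2)) :=
            mul_le_mul_of_nonneg_right hexp (by positivity)
        _ = μ ^ N * (μ ^ 2 * Real.exp 2 * (((N : ℝ) + 1)⁻¹ * (4 / ε ^ 2))) := by ring
    have h12 : (1 : ℝ) ≤ μ ^ 2 * Real.exp 2 * (((N : ℝ) + 1)⁻¹ * (4 / ε ^ 2)) :=
      le_of_mul_le_mul_left h10 hμN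
    have h13 : (N : ℝ) + 1 ≤ 4 * μ ^ 2 * Real.exp 2 / ε ^ 2 := by
      have h14 := mul_le_mul_of_nonneg_left h12 hNpos.le
      rw [mul_one] at h14
      calc (N : ℝ) + 1
          ≤ ((N : ℝ) + 1) * (μ ^ 2 * Real.exp 2 * (((N : ℝ) + 1)⁻¹ * (4 / ε ^ 2))) := h14
        _ = 4 * μ ^ 2 * Real.exp 2 / ε ^ 2 := by field_simp
    linarith
  -- assemble the approximate eigenvector sequence for T
  choose g hg1 hg2 using fun j : ℕ => key (1 / ((j : ℝ) + 1)) (by positivity)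
  refine ⟨g, hg1, ?_⟩
  have hTc : ∀ j : ℕ, T (g j) - ρ • g j = -(ρ • T (S (g j) - μ • g j)) := by
    intro j
    have h1 : T (S (g j) - μ • g j) = g j - μ • T (g j) := by
      rw [map_sub, map_smul]
      congr 1
      exact T.apply_symm_apply (g j)
    rw [h1, smul_sub, smul_smul, hμdef, mul_inv_cancel₀ hρ.ne', one_smul]
    abel
  apply squeeze_zero (g := fun j : ℕ => ρ * ‖(T : X →L[ℝ] X)‖ * (1 / ((j : ℝ) + 1)))
    (fun j => norm_nonneg _)
  · intro j
    rw [hTc j, norm_neg, norm_smul, Real.norm_eq_abs, abs_of_nonneg hρ.le]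
    calc ρ * ‖T (S (g j) - μ • g j)‖
        ≤ ρ * (‖(T : X →L[ℝ] X)‖ * ‖S (g j) - μ • g j‖) :=
          mul_le_mul_of_nonneg_left ((T : X →L[ℝ] X).le_opNorm _) hρ.le
      _ ≤ ρ * (‖(T : X →L[ℝ] X)‖ * (1 / ((j : ℝ) + 1))) := by
          apply mul_le_mul_of_nonneg_left _ hρ.le
          exact mul_le_mul_of_nonneg_left (hg2 j).le (norm_nonneg _)
      _ = ρ * ‖(T : X →L[ℝ] X)‖ * (1 / ((j : ℝ) + 1)) := by ring
  · have h := tendsto_one_div_add_atTop_nhds_zero_nat.const_mul (ρ * ‖(T : X →L[ℝ] X)‖)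
    simpa using h
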